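/- Let W(t) = t⁵ − 5t⁴ − 10t³ + 10t² + 5t − 1 and let f(t) = (t²+1)·|W(t)|^{−4/5}. Then for every real x > 0 the (improper, convergent) integrals satisfy ∫_{1}^{1/x} f(t) dt = − ∫_{1}^{x} f(t) dt; equivalently, the abelian integral α(x) = ∫_{1}^{x} (t²+1)·|W(t)|^{−4/5} dt satisfies α(1/x) + α(x) = 0 for all x > 0. -/

import Mathlib

open MeasureTheory

/-- the abelian integral `α(x) = ∫₁ˣ (t²+1)·|W(t)|^{−4/5} dt`
satisfies the involutive identity `α(1/x) = −α(x)` for all `x > 0`. -/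
theorem stmt_5 (W f : ℝ → ℝ)
    (hW : ∀ t : ℝ, W t = t ^ 5 - 5 * t ^ 4 - 10 * t ^ 3 + 10 * t ^ 2 + 5 * t - 1)
    (hf : ∀ t : ℝ, f t = (t ^ 2 + 1) * |W t| ^ (-(4 : ℝ) / 5)) :
    ∀ x : ℝ, 0 < x →
      (∫ t in (1 : ℝ)..(1 / x), f t) = -∫ t in (1 : ℝ)..x, f t := by
  -- key pointwise identity
  have hW' : ∀ t : ℝ, 0 < t → |W (1 / t)| = |W t| / t ^ 5 := by
    intro t ht
    have h : W (1 / t) = -W t / t ^ 5 := by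
      rw [hW, hW]; field_simp; ring
    rw [h, abs_div, abs_neg, abs_of_pos (pow_pos ht 5)]
  have hpt : ∀ t : ℝ, 0 < t → |(-(t ^ 2)⁻¹)| • f (1 / t) = f t := by
    intro t ht
    rw [hf, hf, hW' t ht,
      Real.div_rpow (abs_nonneg _) (pow_pos ht 5).le]
    have h5 : (t ^ 5 : ℝ) ^ (-(4 : ℝ) / 5) = (t ^ 4)⁻¹ := by
      rw [← Real.rpow_natCast t 5, ← Real.rpow_mul ht.le]
      norm_num
    rw [h5, abs_neg, abs_inv, abs_of_pos (pow_pos ht 2)]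
    have h2 : (0:ℝ) < t ^ 2 := pow_pos ht 2
    have h4 : (0:ℝ) < t ^ 4 := pow_pos ht 4
    field_simp
    have e : t⁻¹ ^ 2 * t ^ 2 = 1 := by rw [inv_pow]; exact inv_mul_cancel₀ h2.ne'
    linear_combination (|W t| ^ (-(4 / 5) : ℝ) + t ^ 2 * |W t| ^ (-(4 / 5) : ℝ)) * e
  suffices key : ∀ x : ℝ, 1 ≤ x →
      (∫ t in (1 : ℝ)..(1 / x), f t) = -∫ t in (1 : ℝ)..x, f t by
    intro x hx
    rcases le_total 1 x with h | h
    · exact key x h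
    · have h1 : (1:ℝ) ≤ 1 / x := by
        rw [le_div_iff₀ hx]; linarith
      have := key (1 / x) h1
      rw [one_div_one_div] at this
      linarith
  intro x hx
  have hx0 : (0:ℝ) < x := zero_lt_one.trans_le hx
  have hix0 : (0:ℝ) < 1 / x := by positivity
  have hix1 : 1 / x ≤ 1 := by
    rw [div_le_one hx0]; exact hx
  have himg : (fun t : ℝ => 1 / t) '' Set.Ioo 1 x = Set.Ioo (1 / x) 1 := by
    ext y
    simp only [Set.mem_image, Set.mem_Ioo]
    constructor
    · rintro ⟨t, ⟨ht1, htx⟩, rfl⟩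
      have ht0 : (0:ℝ) < t := zero_lt_one.trans ht1
      constructor
      · rw [div_lt_div_iff₀ hx0 ht0]; nlinarith
      · rw [div_lt_one ht0]; exact ht1
    · rintro ⟨hy1, hy2⟩
      have hy0 : (0:ℝ) < y := hix0.trans hy1
      refine ⟨1 / y, ⟨?_, ?_⟩, one_div_one_div y⟩
      · rw [lt_div_iff₀ hy0]; linarith
      · rw [div_lt_iff₀ hy0]
        nlinarith [(div_lt_iff₀ hx0).mp hy1]
  have hinj : Set.InjOn (fun t : ℝ => 1 / t) (Set.Ioo 1 x) := by
    intro a _ b _ h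
    have : a⁻¹ = b⁻¹ := by simpa [one_div] using h
    exact inv_injective this
  have hderiv : ∀ t ∈ Set.Ioo (1:ℝ) x,
      HasDerivWithinAt (fun t : ℝ => 1 / t) (-(t ^ 2)⁻¹) (Set.Ioo 1 x) t := by
    intro t ht
    have ht0 : t ≠ 0 := (zero_lt_one.trans ht.1).ne'
    simpa [one_div] using (hasDerivAt_inv ht0).hasDerivWithinAt
  have hsub : ∫ t in Set.Ioo (1/x) 1, f t = ∫ t in Set.Ioo 1 x, f t := by
    rw [← himg,
      MeasureTheory.integral_image_eq_integral_abs_deriv_smul measurableSet_Ioo hderiv hinj f]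
    refine MeasureTheory.setIntegral_congr_fun measurableSet_Ioo ?_
    intro t ht
    exact hpt t (zero_lt_one.trans ht.1)
  rw [intervalIntegral.integral_symm, intervalIntegral.integral_of_le hix1,
    intervalIntegral.integral_of_le hx,
    MeasureTheory.integral_Ioc_eq_integral_Ioo,
    MeasureTheory.integral_Ioc_eq_integral_Ioo, hsub]
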